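/- Let n ≥ 1, let R be a commutative ring, and let n₁, n₂ ∈ M_n(R) be strictly upper triangular. Then there exist h₁, h₂ ∈ M_n(R), each lying in the R-linear span of commutators [a,b] = ab − ba of pairs of matrices a, b ∈ M_n(R), and a strictly lower triangular matrix N ∈ M_{2n}(R), such that ξ·ι(n₁,n₂)·ξ^{-1} = ι(h₁,h₂) + ξ·N·ξ^{-1}. (This is the containment ξ(n ∩ h)ξ^{-1} ⊆ [h,h] + ξ n⁻ ξ^{-1}, where n ∩ h consists of pairs of strictly upper triangular matrices and n⁻ is the strictly lower triangular nilpotent subalgebra.) -/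

import Mathlib

open Matrix

/-- The `n × n` antidiagonal permutation matrix `w_n`, with `(i,j)` entry `δ_{i, n+1-j}`. -/
def wMat (n : ℕ) (R : Type*) [CommRing R] : Matrix (Fin n) (Fin n) R :=
  fun i j => if (i : ℕ) + (j : ℕ) + 1 = n then 1 else 0

/-- The block diagonal matrix `ι(A, D) = [[A, 0], [0, D]]`. -/
def iotaBlk {n : ℕ} {R : Type*} [CommRing R] (A D : Matrix (Fin n) (Fin n) R) :
    Matrix (Fin n ⊕ Fin n) (Fin n ⊕ Fin n) R :=
  Matrix.fromBlocks A 0 0 D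

/-- The matrix `ξ = [[1_n, w_n], [0_n, w_n]]`. -/
def xiMat (n : ℕ) (R : Type*) [CommRing R] : Matrix (Fin n ⊕ Fin n) (Fin n ⊕ Fin n) R :=
  Matrix.fromBlocks 1 (wMat n R) 0 (wMat n R)

/-- The matrix `ξ⁻¹ = [[1_n, -1_n], [0_n, w_n]]`. -/
def xiInvMat (n : ℕ) (R : Type*) [CommRing R] : Matrix (Fin n ⊕ Fin n) (Fin n ⊕ Fin n) R :=
  Matrix.fromBlocks 1 (-1) 0 (wMat n R)

/-- The `R`-linear span of commutators `[a,b] = ab - ba` in `M_n(R)`. -/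
def commutatorSpan (n : ℕ) (R : Type*) [CommRing R] :
    Submodule R (Matrix (Fin n) (Fin n) R) :=
  Submodule.span R {x | ∃ a b : Matrix (Fin n) (Fin n) R, x = a * b - b * a}

/-- If `n₁, n₂ ∈ M_n(R)` are strictly upper triangular, then
`ξ · ι(n₁,n₂) · ξ⁻¹ = ι(h₁,h₂) + ξ · N · ξ⁻¹` with `h₁, h₂` in the span of commutators
and `N` strictly lower triangular: `ξ (n ∩ h) ξ⁻¹ ⊆ [h,h] + ξ n⁻ ξ⁻¹`. -/

lemma wMat_apply {n : ℕ} {R : Type*} [CommRing R] (i j : Fin n) :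
    wMat n R i j = if j = i.rev then (1 : R) else 0 := by
  unfold wMat
  congr 1
  simp only [eq_iff_iff, Fin.ext_iff, Fin.val_rev]
  omega

lemma wMat_mul {n : ℕ} {R : Type*} [CommRing R] (M : Matrix (Fin n) (Fin n) R) :
    wMat n R * M = Matrix.of fun i j => M i.rev j := by
  ext i j
  simp [Matrix.mul_apply, wMat_apply]

lemma mul_wMat {n : ℕ} {R : Type*} [CommRing R] (M : Matrix (Fin n) (Fin n) R) :
    M * wMat n R = Matrix.of fun i j => M i j.rev := by
  ext i j
  have : ∀ k : Fin n, (j = k.rev) = (k = j.rev) := by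
    intro k
    simp only [eq_iff_iff]
    constructor <;> rintro rfl <;> simp [Fin.rev_rev]
  simp [Matrix.mul_apply, wMat_apply, this]

lemma wMat_mul_wMat {n : ℕ} {R : Type*} [CommRing R] :
    wMat n R * wMat n R = 1 := by
  ext i j
  rw [wMat_mul]
  simp only [Matrix.of_apply, wMat_apply, Fin.rev_rev, Matrix.one_apply]
  simp [eq_comm]

lemma mem_commutatorSpan_of_diag_zero {n : ℕ} {R : Type*} [CommRing R]
    (M : Matrix (Fin n) (Fin n) R) (h : ∀ i, M i i = 0) :
    M ∈ commutatorSpan n R := by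
  rw [Matrix.matrix_eq_sum_single M]
  apply Submodule.sum_mem
  intro i _
  apply Submodule.sum_mem
  intro j _
  by_cases hij : i = j
  · subst hij
    rw [h i, Matrix.single_zero]
    exact Submodule.zero_mem _
  · have : Matrix.single i j (M i j) =
        Matrix.single i i 1 * Matrix.single i j (M i j) -
        Matrix.single i j (M i j) * Matrix.single i i 1 := by
      rw [Matrix.single_mul_single_same, Matrix.single_mul_single_of_ne (h := Ne.symm hij), one_mul,
        sub_zero]
    rw [this]
    exact Submodule.subset_span ⟨_, _, rfl⟩

theorem statement1 (n : ℕ) (hn : 1 ≤ n) (R : Type*) [CommRing R]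
    (n₁ n₂ : Matrix (Fin n) (Fin n) R)
    (hn₁ : ∀ i j : Fin n, j ≤ i → n₁ i j = 0)
    (hn₂ : ∀ i j : Fin n, j ≤ i → n₂ i j = 0) :
    ∃ (h₁ h₂ : Matrix (Fin n) (Fin n) R)
      (N : Matrix (Fin n ⊕ Fin n) (Fin n ⊕ Fin n) R),
      h₁ ∈ commutatorSpan n R ∧ h₂ ∈ commutatorSpan n R ∧
      (∀ i j : Fin n ⊕ Fin n,
          (finSumFinEquiv i : ℕ) ≤ (finSumFinEquiv j : ℕ) → N i j = 0) ∧
      xiMat n R * iotaBlk n₁ n₂ * xiInvMat n R =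
        iotaBlk h₁ h₂ + xiMat n R * N * xiInvMat n R := by
  classical
  set w := wMat n R with hw
  set h : Matrix (Fin n) (Fin n) R := n₁ + w * n₂ * w with hh
  have hwL : ∀ (M : Matrix (Fin n) (Fin n) R) i j, (w * M * w) i j = M i.rev j.rev := by
    intro M i j
    rw [hw, mul_wMat, wMat_mul]
    rfl
  refine ⟨h, h, Matrix.fromBlocks (-(w * n₂ * w)) 0 0 (-(w * n₁ * w)), ?_, ?_, ?_, ?_⟩
  · apply mem_commutatorSpan_of_diag_zero
    intro i
    simp only [hh, Matrix.add_apply, hwL]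
    rw [hn₁ i i le_rfl, hn₂ i.rev i.rev le_rfl, add_zero]
  · apply mem_commutatorSpan_of_diag_zero
    intro i
    simp only [hh, Matrix.add_apply, hwL]
    rw [hn₁ i i le_rfl, hn₂ i.rev i.rev le_rfl, add_zero]
  · rintro (i | i) (j | j) hij <;>
      simp only [finSumFinEquiv_apply_left, finSumFinEquiv_apply_right, Fin.coe_castAdd,
        Fin.coe_natAdd, Matrix.fromBlocks_apply₁₁, Matrix.fromBlocks_apply₁₂,
        Matrix.fromBlocks_apply₂₁, Matrix.fromBlocks_apply₂₂, Matrix.zero_apply,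
        Matrix.neg_apply, neg_eq_zero] at *
    · rw [hwL]
      exact hn₂ _ _ (Fin.rev_le_rev.mpr hij)
    · rw [hwL]
      exact hn₁ _ _ (Fin.rev_le_rev.mpr (by omega))
  · have hww : w * w = 1 := wMat_mul_wMat
    have hw2 : ∀ M : Matrix (Fin n) (Fin n) R, w * (w * M) = M := by
      intro M; rw [← mul_assoc, hww, one_mul]
    rw [xiMat, xiInvMat, iotaBlk, iotaBlk, ← hw]
    rw [Matrix.fromBlocks_multiply, Matrix.fromBlocks_multiply,
      Matrix.fromBlocks_multiply, Matrix.fromBlocks_multiply,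
      Matrix.fromBlocks_add]
    rw [Matrix.fromBlocks_inj]
    refine ⟨?_, ?_, ?_, ?_⟩ <;> noncomm_ring [hh, hw2, hww]
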